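/- Let β ∈ (0, π) and κ, χ, m, δ, α ∈ ℝ satisfy: 0 < χ, χ ≤ |β − π/2|, χ ≤ π/2 − |β − π/2|, χ ≤ 1/10; m > 0 and |κ| ≤ 1 − m/30; 0 ≤ δ ≤ χ·m/180; and |α − π/2| ≤ |β − π/2| + δ/2. Define F(a) := cos a · cos β + sin a · sin β · κ. Then max(F(α + δ), F(α − δ)) ≥ F(α) + δ · sin β · χ · m / 120. (The endpoint-gain inequality, which is the conclusion form of Lemma B.2: on the interval [α − δ, α + δ] the function F is strictly monotone with slope of magnitude at least sin β · χ · m / 120, so one endpoint value exceeds the midpoint value by at least δ times that bound.) -/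

import Mathlib

set_option maxHeartbeats 1000000 in
/-- The endpoint-gain inequality (conclusion form of Lemma B.2). -/
theorem endpoint_gain (β κ χ m δ α : ℝ)
    (hβ : β ∈ Set.Ioo 0 Real.pi)
    (hχ0 : 0 < χ) (hχ1 : χ ≤ |β - Real.pi / 2|) (hχ2 : χ ≤ Real.pi / 2 - |β - Real.pi / 2|)
    (hχ3 : χ ≤ 1 / 10)
    (hm : 0 < m) (hκ : |κ| ≤ 1 - m / 30)
    (hδ0 : 0 ≤ δ) (hδ1 : δ ≤ χ * m / 180)
    (hα : |α - Real.pi / 2| ≤ |β - Real.pi / 2| + δ / 2)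
    (F : ℝ → ℝ)
    (hF : ∀ a, F a = Real.cos a * Real.cos β + Real.sin a * Real.sin β * κ) :
    F α + δ * Real.sin β * χ * m / 120 ≤ max (F (α + δ)) (F (α - δ)) := by
  obtain ⟨hβ0, hβπ⟩ := hβ
  set s := Real.sin β with hs_def
  set a := α - Real.pi / 2 with ha_def
  set b := β - Real.pi / 2 with hb_def
  set c := |b| with hc_def
  set aa := |a| with haa_def
  clear_value s a b c aa
  have hκ0 : 0 ≤ |κ| := abs_nonneg κ
  have hm30 : m ≤ 30 := by linarith only [hκ, hκ0]
  have hmχ : m * χ ≤ 30 * χ := mul_le_mul_of_nonneg_right hm30 hχ0.le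
  have hδχ : δ ≤ χ / 6 := by linarith only [hδ1, hmχ]
  have hδsmall : δ ≤ 1 / 60 := by linarith only [hδχ, hχ3]
  have hc1 : χ ≤ c := hχ1
  have hc2 : c ≤ Real.pi / 2 - χ := by linarith only [hχ2]
  have hc0 : 0 ≤ c := hc_def ▸ abs_nonneg b
  have hcπ : c < Real.pi / 2 := by linarith only [hc2, hχ0]
  have haa0 : 0 ≤ aa := haa_def ▸ abs_nonneg a
  have haa1 : aa ≤ c + δ / 2 := hα
  have haaπ : aa < Real.pi / 2 := by linarith only [haa1, hc2, hδχ, hχ0, hχ3]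
  have hpi : (0:ℝ) < Real.pi := Real.pi_pos
  have hb_lo : -(Real.pi / 2) < b := by rw [hb_def]; linarith only [hβ0]
  have hb_hi : b < Real.pi / 2 := by
    have h1 : b ≤ |b| := le_abs_self b
    rw [← hc_def] at h1; linarith only [h1, hcπ]
  have ha_lo : -(Real.pi / 2) < a := by
    have h1 : -|a| ≤ a := neg_abs_le a
    rw [← haa_def] at h1; linarith only [h1, haaπ]
  have ha_hi : a < Real.pi / 2 := by
    have h1 : a ≤ |a| := le_abs_self a
    rw [← haa_def] at h1; linarith only [h1, haaπ]
  -- s = cos c, positive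
  have hs_eq : s = Real.cos c := by
    rw [hc_def, Real.cos_abs, hb_def, hs_def]
    rw [show β - Real.pi / 2 = -(Real.pi / 2 - β) by ring, Real.cos_neg,
      Real.cos_pi_div_two_sub]
  have hs_pos : 0 < s := hs_def ▸ Real.sin_pos_of_pos_of_lt_pi hβ0 hβπ
  have hs_le1 : s ≤ 1 := hs_def ▸ Real.sin_le_one β
  -- trig of shifted coordinates
  have hαa : α = a + Real.pi / 2 := by rw [ha_def]; ring
  have hβb : β = b + Real.pi / 2 := by rw [hb_def]; ring
  have hsinα : Real.sin α = Real.cos a := by rw [hαa, Real.sin_add]; simp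
  have hcosα : Real.cos α = -Real.sin a := by rw [hαa, Real.cos_add]; simp
  have hsinβ : s = Real.cos b := by rw [hs_def, hβb, Real.sin_add]; simp
  have hcosβ : Real.cos β = -Real.sin b := by rw [hβb, Real.cos_add]; simp
  have hcos_a : Real.cos a = Real.cos aa := by rw [haa_def, Real.cos_abs]
  have hcos_b : Real.cos b = Real.cos c := by rw [hc_def, Real.cos_abs]
  have hsin_a_abs : |Real.sin a| = Real.sin aa := by
    rcases le_or_gt 0 a with h | h
    · rw [haa_def, abs_of_nonneg h,
        abs_of_nonneg (Real.sin_nonneg_of_nonneg_of_le_pi h (by linarith only [ha_hi, hpi]))]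
    · have hsneg : Real.sin a < 0 :=
        Real.sin_neg_of_neg_of_neg_pi_lt h (by linarith only [ha_lo, hpi])
      rw [haa_def, abs_of_neg h, abs_of_neg hsneg, Real.sin_neg]
  have hsin_b_abs : |Real.sin b| = Real.sin c := by
    rcases le_or_gt 0 b with h | h
    · rw [hc_def, abs_of_nonneg h,
        abs_of_nonneg (Real.sin_nonneg_of_nonneg_of_le_pi h (by linarith only [hb_hi, hpi]))]
    · have hsneg : Real.sin b < 0 :=
        Real.sin_neg_of_neg_of_neg_pi_lt h (by linarith only [hb_lo, hpi])
      rw [hc_def, abs_of_neg h, abs_of_neg hsneg, Real.sin_neg]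
  have hcos_a_pos : 0 < Real.cos a := Real.cos_pos_of_mem_Ioo ⟨ha_lo, ha_hi⟩
  have hcos_c_pos : 0 < Real.cos c :=
    Real.cos_pos_of_mem_Ioo ⟨by linarith only [hc0, hpi], hcπ⟩
  have hsin_aa_nonneg : 0 ≤ Real.sin aa :=
    Real.sin_nonneg_of_nonneg_of_le_pi haa0 (by linarith only [haaπ, hpi])
  -- the derivative-like quantity
  set G := κ * Real.cos α * s - Real.sin α * Real.cos β with hG_def
  clear_value G
  have hGab : G = Real.cos a * Real.sin b - κ * Real.sin a * Real.cos b := by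
    rw [hG_def, hsinα, hcosα, hsinβ, hcosβ]; ring
  -- lower bound |G| ≥ sin (c - aa) + (m/30) * sin aa * cos c
  have hGlow : Real.sin (c - aa) + m / 30 * (Real.sin aa * Real.cos c) ≤ |G| := by
    have h1 : |Real.cos a * Real.sin b| - |κ * Real.sin a * Real.cos b| ≤ |G| := by
      rw [hGab]; exact abs_sub_abs_le_abs_sub _ _
    have h2 : |Real.cos a * Real.sin b| = Real.cos aa * Real.sin c := by
      rw [abs_mul, abs_of_pos hcos_a_pos, hsin_b_abs, hcos_a]
    have h3 : |κ * Real.sin a * Real.cos b| = |κ| * (Real.sin aa * Real.cos c) := by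
      rw [abs_mul, abs_mul, hsin_a_abs, hcos_b, abs_of_pos hcos_c_pos]; ring
    rw [h2, h3] at h1
    have hp0 : 0 ≤ Real.sin aa * Real.cos c := mul_nonneg hsin_aa_nonneg hcos_c_pos.le
    have h4 : |κ| * (Real.sin aa * Real.cos c) ≤ (1 - m / 30) * (Real.sin aa * Real.cos c) :=
      mul_le_mul_of_nonneg_right hκ hp0
    have h5 : Real.sin (c - aa) = Real.sin c * Real.cos aa - Real.cos c * Real.sin aa :=
      Real.sin_sub c aa
    linarith only [h1, h4, h5]
  have hsm : s * m ≤ 30 := by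
    have h := mul_le_mul_of_nonneg_right hs_le1 hm.le
    linarith only [h, hm30]
  have hsχm : s * χ * m ≤ 30 * χ := by
    have h := mul_le_mul_of_nonneg_right hsm hχ0.le
    linarith only [h]
  have hχsq : χ * χ ≤ 1 / 100 := by
    have h := mul_le_mul_of_nonneg_left hχ3 hχ0.le
    linarith only [h, hχ3, hχ0]
  have hχcube : χ * (χ * χ) ≤ χ * (1 / 100) := mul_le_mul_of_nonneg_left hχsq hχ0.le
  -- key: |G| ≥ s*χ*m/120 + (3/5)*δ
  have hskey : s * χ * m / 120 + 3 / 5 * δ ≤ |G| := by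
    rcases le_or_gt aa (c / 2) with hcase | hcase
    · -- case 1 : aa small
      have h1 : Real.sin (χ / 2) ≤ Real.sin (c - aa) :=
        Real.sin_le_sin_of_le_of_le_pi_div_two (by linarith only [hχ0, hpi])
          (by linarith only [hcase, hcπ, hc0, haa0]) (by linarith only [hcase, hc1])
      have h2 : χ / 2 - (χ / 2) ^ 3 / 4 < Real.sin (χ / 2) :=
        lt_of_le_of_lt (by linarith only [pow_pos (by linarith only [hχ0] : (0:ℝ) < χ / 2) 3])
            (Real.sin_gt_sub_cube (by linarith only [hχ0]))
      have h3 : 0 ≤ m / 30 * (Real.sin aa * Real.cos c) :=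
        mul_nonneg (by linarith only [hm]) (mul_nonneg hsin_aa_nonneg hcos_c_pos.le)
      linarith only [hGlow, h1, h2, h3, hχcube, hsχm, hδχ, hχ0]
    · -- case 2 : aa ≥ c/2
      have h1 : -(δ / 2) ≤ Real.sin (c - aa) := by
        rcases le_or_gt 0 (c - aa) with h | h
        · have h' := Real.sin_nonneg_of_nonneg_of_le_pi h (by linarith only [hcπ, haa0, hpi])
          linarith only [h', hδ0]
        · have h' := Real.le_sin h.le
          linarith only [h', haa1]
      have h2 : Real.sin (c / 2) ≤ Real.sin aa :=
        Real.sin_le_sin_of_le_of_le_pi_div_two (by linarith only [hc0, hpi]) haaπ.le hcase.le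
      have h3 : Real.sin (2 * χ) ≤ Real.sin (2 * c) := by
        rcases le_or_gt (2 * c) (Real.pi / 2) with h | h
        · exact Real.sin_le_sin_of_le_of_le_pi_div_two (by linarith only [hχ0, hpi]) h
            (by linarith only [hc1])
        · rw [show (2 : ℝ) * c = Real.pi - (Real.pi - 2 * c) by ring, Real.sin_pi_sub]
          exact Real.sin_le_sin_of_le_of_le_pi_div_two (by linarith only [hχ0, hpi])
            (by linarith only [h]) (by linarith only [hc2])
      have h4 : Real.sin (2 * c) ≤ 4 * (Real.sin (c / 2) * Real.cos c) := by
        have e4 : 0 ≤ Real.sin (c / 2) :=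
          Real.sin_nonneg_of_nonneg_of_le_pi (by linarith only [hc0])
            (by linarith only [hcπ, hpi])
        have e1 : Real.sin (2 * c) = 4 * (Real.sin (c / 2) * (Real.cos (c / 2) * Real.cos c)) := by
          rw [Real.sin_two_mul, show c = 2 * (c / 2) by ring, Real.sin_two_mul]
          rw [show 2 * (c/2) / 2 = c / 2 by ring, Real.cos_two_mul]
          ring
        have e5 : 0 ≤ Real.sin (c / 2) * Real.cos c * (1 - Real.cos (c / 2)) :=
          mul_nonneg (mul_nonneg e4 hcos_c_pos.le)
            (by linarith only [Real.cos_le_one (c / 2)])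
        linarith only [e1, e5]
      have h5 : 2 * χ - (2 * χ) ^ 3 / 4 < Real.sin (2 * χ) :=
        lt_of_le_of_lt (by linarith only [pow_pos (by linarith only [hχ0] : (0:ℝ) < 2 * χ) 3])
            (Real.sin_gt_sub_cube (by linarith only [hχ0]))
      have h6 : Real.sin (c / 2) * Real.cos c ≤ Real.sin aa * Real.cos c :=
        mul_le_mul_of_nonneg_right h2 hcos_c_pos.le
      have h7 : 99 / 200 * χ ≤ Real.sin aa * Real.cos c := by
        linarith only [h3, h4, h5, h6, hχcube]
      have h8 : m / 30 * (99 / 200 * χ) ≤ m / 30 * (Real.sin aa * Real.cos c) :=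
        mul_le_mul_of_nonneg_left h7 (by linarith only [hm])
      have h9 : s * (χ * m) ≤ 1 * (χ * m) :=
        mul_le_mul_of_nonneg_right hs_le1 (mul_pos hχ0 hm).le
      linarith only [hGlow, h1, h8, h9, hδ1, hδ0]
  -- decomposition of endpoint values
  have hFp : F (α + δ) = Real.cos δ * F α + Real.sin δ * G := by
    rw [hF, hF, hG_def, Real.cos_add, Real.sin_add]; ring
  have hFm : F (α - δ) = Real.cos δ * F α - Real.sin δ * G := by
    rw [hF, hF, hG_def, Real.cos_sub, Real.sin_sub]; ring
  -- F α ≤ 1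
  have hκ1 : κ * κ ≤ 1 := by
    have h := abs_le.mp (hκ.trans (by linarith only [hm] : (1 : ℝ) - m / 30 ≤ 1))
    have h2 := mul_nonneg (by linarith only [h.2] : (0:ℝ) ≤ 1 - κ)
      (by linarith only [h.1] : (0:ℝ) ≤ 1 + κ)
    linarith only [h2]
  have hpyth : s * s + Real.cos β * Real.cos β = 1 := by
    rw [hs_def]; linarith only [Real.sin_sq_add_cos_sq β]
  have hFα1 : F α ≤ 1 := by
    rw [hF]
    have p1 := Real.sin_sq_add_cos_sq α
    have p2 : (0:ℝ) ≤ (Real.cos α - Real.cos β) ^ 2 := sq_nonneg _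
    have p3 : (0:ℝ) ≤ (Real.sin α - s * κ) ^ 2 := sq_nonneg _
    have p4 : s * s * (κ * κ) ≤ s * s * 1 :=
      mul_le_mul_of_nonneg_left hκ1 (mul_self_nonneg s)
    linarith only [p1, p2, p3, p4, hpyth]
  -- |G| ≤ 2
  have hG2 : |G| ≤ 2 := by
    rw [hG_def]
    have hk : |κ| ≤ 1 := hκ.trans (by linarith only [hm])
    have b1 : |κ * Real.cos α * s| ≤ 1 := by
      rw [abs_mul, abs_mul]
      have hc' : |Real.cos α| ≤ 1 := Real.abs_cos_le_one α
      have hsb : |s| ≤ 1 := by rw [hs_def]; exact Real.abs_sin_le_one β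
      have q1 : |κ| * |Real.cos α| ≤ 1 * 1 :=
        mul_le_mul hk hc' (abs_nonneg _) zero_le_one
      have q2 : |κ| * |Real.cos α| * |s| ≤ 1 * 1 :=
        mul_le_mul (by linarith only [q1]) hsb (abs_nonneg _) zero_le_one
      linarith only [q2]
    have b2 : |Real.sin α * Real.cos β| ≤ 1 := by
      rw [abs_mul]
      have q := mul_le_mul (Real.abs_sin_le_one α) (Real.abs_cos_le_one β)
        (abs_nonneg _) zero_le_one
      linarith only [q]
    calc |κ * Real.cos α * s - Real.sin α * Real.cos β|
        ≤ |κ * Real.cos α * s| + |Real.sin α * Real.cos β| := abs_sub _ _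
      _ ≤ 2 := by linarith only [b1, b2]
  -- main estimate on the better endpoint
  have hkey : F α + δ * s * χ * m / 120 ≤ Real.cos δ * F α + Real.sin δ * |G| := by
    rcases eq_or_lt_of_le hδ0 with h0 | h0
    · simp [← h0]
    · have hGnn : 0 ≤ |G| := abs_nonneg G
      have hsinδ : (δ - δ ^ 3 / 4) * |G| ≤ Real.sin δ * |G| :=
        mul_le_mul_of_nonneg_right
          (lt_of_le_of_lt (by linarith only [pow_pos h0 3]) (Real.sin_gt_sub_cube h0)).le hGnn
      have hcosδ : 1 - δ ^ 2 / 2 ≤ Real.cos δ := Real.one_sub_sq_div_two_le_cos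
      have hcosδ1 : Real.cos δ ≤ 1 := Real.cos_le_one δ
      have hcube : δ ^ 3 / 4 * |G| ≤ δ ^ 3 / 4 * 2 :=
        mul_le_mul_of_nonneg_left hG2 (by positivity)
      have hlin : δ * (s * χ * m / 120 + 3 / 5 * δ) ≤ δ * |G| :=
        mul_le_mul_of_nonneg_left hskey h0.le
      have hFcos : 0 ≤ (1 - Real.cos δ) * (1 - F α) :=
        mul_nonneg (by linarith only [hcosδ1]) (by linarith only [hFα1])
      have hd3 : δ ^ 2 * δ ≤ δ ^ 2 * (1 / 60) :=
        mul_le_mul_of_nonneg_left hδsmall (sq_nonneg δ)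
      linarith only [hsinδ, hcube, hlin, hFcos, hcosδ, hd3, sq_nonneg δ, h0.le]
  rcases le_or_gt 0 G with hGpos | hGneg
  · have h : F α + δ * s * χ * m / 120 ≤ F (α + δ) := by
      rw [abs_of_nonneg hGpos] at hkey
      rw [hFp]; exact hkey
    exact h.trans (le_max_left _ _)
  · have h : F α + δ * s * χ * m / 120 ≤ F (α - δ) := by
      rw [abs_of_neg hGneg] at hkey
      rw [hFm]; linarith only [hkey]
    exact h.trans (le_max_right _ _)
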